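/- Let D, B_f, B_{h,g} > 0 and let R^f = Q^f∘K^f and R^g = Q^g∘K^g be RNNs with input dimensions d_f, d'_f, output dimensions d'_f, d'_g, and hidden state sizes m_f, m_g, where the input dimension of R^g equals the output dimension d'_f of R^f. Assume (A1) ‖(R^f D x)[t]‖_∞ <= B_f for all x ∈ [-D,D]^{d_f} and all t ∈ ℕ₀, and (A2) ‖(K^g D y)[t]‖_∞ <= B_{h,g} for all y ∈ [-B_f, B_f]^{d'_f} and all t ∈ ℕ₀. Then there exists an RNN R = Q∘K with input dimension d_f, output dimension d'_g, and hidden state size m_f + 2d'_f + m_g + 5 such that: (i) for all x ∈ [-D,D]^{d_f} and all integers k >= 3, (R D x)[2^k - 2] = (R^g D ((R^f D x)[2^{k-1} - 2]))[2^{k-1} - 2]; (ii) there exist matrices M ∈ ℝ^{m_f×(m_f+2d'_f+m_g+5)} and W ∈ ℝ^{m_g×(m_f+2d'_f+m_g+5)} such that M(K D x)[t] = (K^f D x)[t] for all t ∈ ℕ₀ and W(K D x)[2^k - 2] = (K^g D ((R^f D x)[2^{k-1}-2]))[2^{k-1}-2] for all integers k >= 3; (iii) if additionally there are B_{h,f},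 B_g > 0 with ‖(K^f D x)[t]‖_∞ <= B_{h,f} for all x ∈ [-D,D]^{d_f}, t ∈ ℕ₀, and ‖(R^g D y)[t]‖_∞ <= B_g for all y ∈ [-B_f,B_f]^{d'_f}, t ∈ ℕ₀, then ‖(K D x)[t]‖_∞ <= max{2, B_f, B_{h,g}, B_{h,f}} and ‖(R D x)[t]‖_∞ <= B_g for all x ∈ [-D,D]^{d_f} and t ∈ ℕ₀. -/
import Mathlib


/-- ReLU applied componentwise. -/
noncomputable def relu {n : Type*} (v : n → ℝ) : n → ℝ := fun i => max 0 (v i)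

/-- An RNN with input index type `ι`, hidden state index type `κ`, output index type `ω`,
parametrized by weights `A_h, A_x, A_o, b_h, b_o`. -/
structure RNN (ι κ ω : Type) where
  Ah : Matrix κ κ ℝ
  Ax : Matrix κ ι ℝ
  Ao : Matrix ω κ ℝ
  bh : κ → ℝ
  bo : ω → ℝ

/-- Hidden state sequence `(K 𝒟 x)[t]` for the input sequence `(𝒟 x)[t] = x·1{t=0}`,
with the convention `h[-1] = 0`:  `h[0] = ρ(A_x x + b_h)`, `h[t+1] = ρ(A_h h[t] + b_h)`. -/
noncomputable def RNN.hid {ι κ ω : Type} [Fintype ι] [Fintype κ] (R : RNN ι κ ω)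
    (x : ι → ℝ) : ℕ → κ → ℝ
  | 0 => relu (R.Ax.mulVec x + R.bh)
  | t + 1 => relu (R.Ah.mulVec (RNN.hid R x t) + R.bh)

/-- Output sequence `(R 𝒟 x)[t] = A_o h[t] + b_o`. -/
noncomputable def RNN.out {ι κ ω : Type} [Fintype ι] [Fintype κ] (R : RNN ι κ ω)
    (x : ι → ℝ) (t : ℕ) : ω → ℝ :=
  R.Ao.mulVec (R.hid x t) + R.bo

namespace S8

/-- reindexing an RNN along an equiv of hidden index types -/
def RNN.reindex {ι κ κ' ω : Type} (R : RNN ι κ ω) (e : κ ≃ κ') : RNN ι κ' ω :=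
  ⟨fun i j => R.Ah (e.symm i) (e.symm j), fun i j => R.Ax (e.symm i) j,
   fun o j => R.Ao o (e.symm j), fun i => R.bh (e.symm i), R.bo⟩

theorem reindex_hid {ι κ κ' ω : Type} [Fintype ι] [Fintype κ] [Fintype κ']
    (R : RNN ι κ ω) (e : κ ≃ κ') (x : ι → ℝ) (t : ℕ) :
    (RNN.reindex R e).hid x t = fun i => R.hid x t (e.symm i) := by
  induction t with
  | zero =>
    funext i
    simp only [RNN.hid, RNN.reindex, relu, Matrix.mulVec, dotProduct, Pi.add_apply]
  | succ t ih =>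
    show relu ((RNN.reindex R e).Ah.mulVec ((RNN.reindex R e).hid x t) + (RNN.reindex R e).bh) =
      fun i => relu (R.Ah.mulVec (R.hid x t) + R.bh) (e.symm i)
    rw [ih]
    funext i
    simp only [RNN.reindex, relu, Matrix.mulVec, dotProduct, Pi.add_apply]
    congr 2
    rw [← Equiv.sum_comp e.symm (fun j => R.Ah (e.symm i) j * R.hid x t j)]

theorem reindex_out {ι κ κ' ω : Type} [Fintype ι] [Fintype κ] [Fintype κ']
    (R : RNN ι κ ω) (e : κ ≃ κ') (x : ι → ℝ) (t : ℕ) :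
    (RNN.reindex R e).out x t = R.out x t := by
  funext o
  rw [RNN.out, RNN.out, reindex_hid]
  simp only [RNN.reindex, Matrix.mulVec, dotProduct, Pi.add_apply]
  congr 1
  rw [← Equiv.sum_comp e.symm (fun j => R.Ao o j * R.hid x t j)]

/-- power-of-two predicate, decidably -/
def isP2 (n : ℕ) : Prop := 2 ^ (Nat.log 2 n) = n

instance : DecidablePred isP2 := fun _ => by unfold isP2; infer_instance

lemma isP2_pow (j : ℕ) : isP2 (2 ^ j) := by unfold isP2; rw [Nat.log_pow one_lt_two]

lemma not_isP2_between {j n : ℕ} (h1 : 2 ^ j < n) (h2 : n < 2 ^ (j + 1)) : ¬ isP2 n := by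
  intro h
  have hl : Nat.log 2 n = j := Nat.log_eq_of_pow_le_of_lt_pow h1.le h2
  unfold isP2 at h
  rw [hl] at h
  omega

/-- pulse condition: z_t = 1 -/
def Zc (t : ℕ) : Prop := t = 0 ∨ (2 ≤ t ∧ isP2 (t + 2))
/-- delayed pulse: q_t = 1 (also: g is zeroed) -/
def Qc (t : ℕ) : Prop := t = 1 ∨ (3 ≤ t ∧ isP2 (t + 1))

instance : DecidablePred Zc := fun _ => by unfold Zc; infer_instance
instance : DecidablePred Qc := fun _ => by unfold Qc; infer_instance



section Construction

variable {df d'f mf mg d'g : ℕ}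
variable (Rf : RNN (Fin df) (Fin mf) (Fin d'f)) (Rg : RNN (Fin d'f) (Fin mg) (Fin d'g))
variable (Bf Bhg : ℝ)

/-- hidden index type of the combined network -/
abbrev K0 (mf d'f mg : ℕ) : Type :=
  (Fin mf) ⊕ ((Fin d'f) ⊕ ((Fin d'f) ⊕ ((Fin mg) ⊕ (Fin 5))))

noncomputable def C2 : ℝ := Bf + ‖Rf.bo‖
noncomputable def C3 : ℝ := (∑ i, ∑ j, |Rg.Ah i j|) * Bhg + ‖Rg.bh‖

/-- the combined (clocked concatenation) RNN, on a structured index type.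
Clock coordinates: 0 = O (constant one), 1 = F (faller), 2 = c (riser),
3 = z (pulse), 4 = q (delayed pulse). -/
noncomputable def Rc : RNN (Fin df) (K0 mf d'f mg) (Fin d'g) where
  Ah := fun i => match i with
    | .inl a => Sum.elim (Rf.Ah a) 0
    | .inr (.inl b) => Sum.elim (Rf.Ao b)
        (Sum.elim 0 (Sum.elim 0 (Sum.elim 0 ![0, 0, 0, C2 Rf Bf, 0])))
    | .inr (.inr (.inl b)) => Sum.elim (fun a => -(Rf.Ao b a))
        (Sum.elim 0 (Sum.elim 0 (Sum.elim 0 ![0, 0, 0, C2 Rf Bf, 0])))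
    | .inr (.inr (.inr (.inl i))) => Sum.elim 0
        (Sum.elim (Rg.Ax i) (Sum.elim (fun b => -(Rg.Ax i b))
          (Sum.elim (Rg.Ah i) ![0, 0, 0, -(C3 Rg Bhg), 0])))
    | .inr (.inr (.inr (.inr j))) =>
        ![ (0 : K0 mf d'f mg → ℝ),
           Sum.elim 0 (Sum.elim 0 (Sum.elim 0 (Sum.elim 0 ![-(3/2), 1/2, 0, 0, 0]))),
           Sum.elim 0 (Sum.elim 0 (Sum.elim 0 (Sum.elim 0 ![0, 2, 2, -8, 0]))),
           Sum.elim 0 (Sum.elim 0 (Sum.elim 0 (Sum.elim 0 ![-2, 8/3, 2, -3, 0]))),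
           Sum.elim 0 (Sum.elim 0 (Sum.elim 0 (Sum.elim 0 ![0, 0, 0, 1, 0]))) ] j
  Ax := fun i => match i with
    | .inl a => Rf.Ax a
    | _ => 0
  Ao := fun o => Sum.elim 0 (Sum.elim 0 (Sum.elim 0
      (Sum.elim (Rg.Ao o) ![0, 0, 0, 0, (Rg.Ao.mulVec (Rg.hid 0 0)) o])))
  bh := Sum.elim Rf.bh (Sum.elim (fun b => Rf.bo b - C2 Rf Bf)
      (Sum.elim (fun b => -(Rf.bo b) - C2 Rf Bf)
        (Sum.elim Rg.bh ![1, 3/2, 0, 1, 0])))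
  bo := Rg.bo

variable (x : Fin df → ℝ)

/-- spec of the u-block -/
noncomputable def Us (t : ℕ) : Fin d'f → ℝ :=
  if Qc t then relu (Rf.out x (t - 1)) else 0
/-- spec of the v-block -/
noncomputable def Vs (t : ℕ) : Fin d'f → ℝ :=
  if Qc t then relu (-(Rf.out x (t - 1))) else 0
/-- spec of the g-block -/
noncomputable def Gs (t : ℕ) : Fin mg → ℝ :=
  if t = 0 then Rg.hid 0 0
  else if Qc t then 0
  else if t = 2 then Rg.hid (Rf.out x 0) 0
  else Rg.hid (Rf.out x (2 ^ (Nat.log 2 t) - 2)) (t - 2 ^ (Nat.log 2 t))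

noncomputable def Fs (t : ℕ) : ℝ := (3 / 2) * (2 : ℝ) ^ (-(t : ℤ))
noncomputable def Cs (t : ℕ) : ℝ :=
  if t = 2 then 3 / 2
  else if t ≤ 1 then 0
  else if Qc t then 0
  else (2 : ℝ) ^ ((t : ℤ) + 3 - (2 : ℤ) ^ (Nat.log 2 t + 1)) - (2 : ℝ) ^ (1 - (t : ℤ))
noncomputable def Zs (t : ℕ) : ℝ := if Zc t then 1 else 0
noncomputable def Qs (t : ℕ) : ℝ := if Qc t then 1 else 0

/-- full state spec -/
noncomputable def Ss (t : ℕ) : K0 mf d'f mg → ℝ :=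
  Sum.elim (Rf.hid x t) (Sum.elim (Us Rf x t) (Sum.elim (Vs Rf x t)
    (Sum.elim (Gs Rf Rg x t) ![1, Fs t, Cs t, Zs t, Qs t])))

lemma sumK0 (f : K0 mf d'f mg → ℝ) :
    ∑ k, f k = (∑ a, f (.inl a)) + ((∑ b, f (.inr (.inl b)))
      + ((∑ b, f (.inr (.inr (.inl b)))) + ((∑ i, f (.inr (.inr (.inr (.inl i)))))
      + (f (.inr (.inr (.inr (.inr 0)))) + (f (.inr (.inr (.inr (.inr 1))))
      + (f (.inr (.inr (.inr (.inr 2)))) + (f (.inr (.inr (.inr (.inr 3))))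
      + f (.inr (.inr (.inr (.inr 4))))))))))) := by
  rw [Fintype.sum_sum_type, Fintype.sum_sum_type, Fintype.sum_sum_type,
    Fintype.sum_sum_type, Fin.sum_univ_five]
  ring

section Preact

variable (t : ℕ)

noncomputable def pre (t : ℕ) : K0 mf d'f mg → ℝ :=
  (Rc Rf Rg Bf Bhg).Ah.mulVec (Ss Rf Rg x t) + (Rc Rf Rg Bf Bhg).bh

lemma pre_f (a : Fin mf) :
    pre Rf Rg Bf Bhg x t (.inl a) = (Rf.Ah.mulVec (Rf.hid x t) + Rf.bh) a := by
  simp only [pre, Rc, Pi.add_apply, Matrix.mulVec, dotProduct, sumK0, Ss,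
    Sum.elim_inl, Sum.elim_inr, Pi.zero_apply, zero_mul, Finset.sum_const_zero]
  norm_num

lemma pre_u (b : Fin d'f) :
    pre Rf Rg Bf Bhg x t (.inr (.inl b))
      = Rf.out x t b + C2 Rf Bf * Zs t - C2 Rf Bf := by
  simp only [pre, Rc, Pi.add_apply, Matrix.mulVec, dotProduct, sumK0, Ss,
    Sum.elim_inl, Sum.elim_inr, Pi.zero_apply, zero_mul, Finset.sum_const_zero,
    RNN.out, Matrix.cons_val_zero, Matrix.cons_val_one, Matrix.head_cons,
    Matrix.cons_val_two, Matrix.tail_cons, Matrix.cons_val_three, Matrix.cons_val_four]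
  ring

lemma pre_v (b : Fin d'f) :
    pre Rf Rg Bf Bhg x t (.inr (.inr (.inl b)))
      = -(Rf.out x t b) + C2 Rf Bf * Zs t - C2 Rf Bf := by
  simp only [pre, Rc, Pi.add_apply, Matrix.mulVec, dotProduct, sumK0, Ss,
    Sum.elim_inl, Sum.elim_inr, Pi.zero_apply, zero_mul, Finset.sum_const_zero,
    RNN.out, Matrix.cons_val_zero, Matrix.cons_val_one, Matrix.head_cons,
    Matrix.cons_val_two, Matrix.tail_cons, Matrix.cons_val_three, Matrix.cons_val_four,
    neg_mul, Finset.sum_neg_distrib]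
  ring

lemma pre_g (i : Fin mg) :
    pre Rf Rg Bf Bhg x t (.inr (.inr (.inr (.inl i))))
      = (Rg.Ah.mulVec (Gs Rf Rg x t)) i
        + (Rg.Ax.mulVec (Us Rf x t - Vs Rf x t)) i
        - C3 Rg Bhg * Zs t + Rg.bh i := by
  simp only [pre, Rc, Pi.add_apply, Matrix.mulVec, dotProduct, sumK0, Ss,
    Sum.elim_inl, Sum.elim_inr, Pi.zero_apply, zero_mul, Finset.sum_const_zero,
    Matrix.cons_val_zero, Matrix.cons_val_one, Matrix.head_cons,
    Matrix.cons_val_two, Matrix.tail_cons, Matrix.cons_val_three, Matrix.cons_val_four,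
    Pi.sub_apply, neg_mul, mul_sub, Finset.sum_sub_distrib, Finset.sum_neg_distrib]
  ring

lemma pre_O : pre Rf Rg Bf Bhg x t (.inr (.inr (.inr (.inr 0)))) = 1 := by
  simp only [pre, Rc, Pi.add_apply, Matrix.mulVec, dotProduct, sumK0, Ss,
    Sum.elim_inl, Sum.elim_inr, Pi.zero_apply, zero_mul, Finset.sum_const_zero,
    Matrix.cons_val_zero, Matrix.cons_val_one, Matrix.head_cons,
    Matrix.cons_val_two, Matrix.tail_cons, Matrix.cons_val_three, Matrix.cons_val_four]
  norm_num

lemma pre_F : pre Rf Rg Bf Bhg x t (.inr (.inr (.inr (.inr 1)))) = Fs t / 2 := by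
  simp only [pre, Rc, Pi.add_apply, Matrix.mulVec, dotProduct, sumK0, Ss,
    Sum.elim_inl, Sum.elim_inr, Pi.zero_apply, zero_mul, Finset.sum_const_zero,
    Matrix.cons_val_zero, Matrix.cons_val_one, Matrix.head_cons,
    Matrix.cons_val_two, Matrix.tail_cons, Matrix.cons_val_three, Matrix.cons_val_four]
  ring

lemma pre_c : pre Rf Rg Bf Bhg x t (.inr (.inr (.inr (.inr 2))))
    = 2 * Cs t + 2 * Fs t - 8 * Zs t := by
  simp only [pre, Rc, Pi.add_apply, Matrix.mulVec, dotProduct, sumK0, Ss,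
    Sum.elim_inl, Sum.elim_inr, Pi.zero_apply, zero_mul, Finset.sum_const_zero,
    Matrix.cons_val_zero, Matrix.cons_val_one, Matrix.head_cons,
    Matrix.cons_val_two, Matrix.tail_cons, Matrix.cons_val_three, Matrix.cons_val_four]
  ring

lemma pre_z : pre Rf Rg Bf Bhg x t (.inr (.inr (.inr (.inr 3))))
    = 2 * Cs t + (8/3) * Fs t - 3 * Zs t - 1 := by
  simp only [pre, Rc, Pi.add_apply, Matrix.mulVec, dotProduct, sumK0, Ss,
    Sum.elim_inl, Sum.elim_inr, Pi.zero_apply, zero_mul, Finset.sum_const_zero,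
    Matrix.cons_val_zero, Matrix.cons_val_one, Matrix.head_cons,
    Matrix.cons_val_two, Matrix.tail_cons, Matrix.cons_val_three, Matrix.cons_val_four]
  ring

lemma pre_q : pre Rf Rg Bf Bhg x t (.inr (.inr (.inr (.inr 4)))) = Zs t := by
  simp only [pre, Rc, Pi.add_apply, Matrix.mulVec, dotProduct, sumK0, Ss,
    Sum.elim_inl, Sum.elim_inr, Pi.zero_apply, zero_mul, Finset.sum_const_zero,
    Matrix.cons_val_zero, Matrix.cons_val_one, Matrix.head_cons,
    Matrix.cons_val_two, Matrix.tail_cons, Matrix.cons_val_three, Matrix.cons_val_four]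
  ring

end Preact


end Construction

lemma Qc_succ (t : ℕ) : Qc (t + 1) ↔ Zc t := by
  unfold Qc Zc
  constructor
  · rintro (h | ⟨h1, h2⟩)
    · omega
    · exact Or.inr ⟨by omega, h2⟩
  · rintro (h | ⟨h1, h2⟩)
    · subst h; norm_num
    · exact Or.inr ⟨by omega, h2⟩

lemma not_Qc_zero : ¬ Qc 0 := by rintro (h | ⟨h1, h2⟩) <;> omega
lemma Qc_one : Qc 1 := Or.inl rfl
lemma not_Qc_two : ¬ Qc 2 := by rintro (h | ⟨h1, h2⟩) <;> omega
lemma Qc_three : Qc 3 := Or.inr ⟨le_refl _, by have := isP2_pow 2; norm_num at this ⊢; exact this⟩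
lemma Zc_zero : Zc 0 := Or.inl rfl
lemma not_Zc_one : ¬ Zc 1 := by
  rintro (h | ⟨h1, h2⟩)
  · omega
  · exact not_isP2_between (j := 1) (by norm_num) (by norm_num) h2
lemma Zc_two : Zc 2 := Or.inr ⟨le_refl _, by have := isP2_pow 2; norm_num at this ⊢; exact this⟩
lemma not_Zc_three : ¬ Zc 3 := by
  rintro (h | ⟨h1, h2⟩)
  · omega
  · exact not_isP2_between (j := 2) (by norm_num) (by norm_num) h2

/-! ### zpow helpers -/

lemma pw_pos (a : ℤ) : (0 : ℝ) < 2 ^ a := zpow_pos (by norm_num) a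
lemma pw_add (a b : ℤ) : (2 : ℝ) ^ (a + b) = 2 ^ a * 2 ^ b := zpow_add₀ two_ne_zero a b
lemma pw_mono {a b : ℤ} (h : a ≤ b) : (2 : ℝ) ^ a ≤ 2 ^ b := zpow_le_zpow_right₀ one_le_two h
lemma pw_le_one {a : ℤ} (h : a ≤ 0) : (2 : ℝ) ^ a ≤ 1 := zpow_le_one_of_nonpos₀ one_le_two h

lemma Fs_succ (t : ℕ) : Fs t / 2 = Fs (t + 1) := by
  unfold Fs
  have : (-((t : ℤ) + 1)) = (-(t:ℤ)) + (-1) := by ring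
  push_cast
  rw [this, pw_add]
  norm_num
  ring

lemma Fs_eq (t : ℕ) : Fs t = (3/2) * (2:ℝ) ^ (-(t:ℤ)) := rfl

section Specs
variable {df d'f mf mg d'g : ℕ}
variable (Rf : RNN (Fin df) (Fin mf) (Fin d'f)) (Rg : RNN (Fin d'f) (Fin mg) (Fin d'g))
variable (x : Fin df → ℝ)

lemma pow_succ_two (j : ℕ) : 2 ^ (j + 1) = 2 * 2 ^ j := by rw [pow_succ]; ring

lemma four_le_pow {j : ℕ} (hj : 2 ≤ j) : 4 ≤ 2 ^ j := by
  calc (4 : ℕ) = 2 ^ 2 := by norm_num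
  _ ≤ 2 ^ j := Nat.pow_le_pow_right (by norm_num) hj

lemma not_Qc_epoch {t j : ℕ} (hj : 2 ≤ j) (h1 : 2 ^ j ≤ t) (h2 : t ≤ 2 ^ (j + 1) - 2) :
    ¬ Qc t := by
  have h4 := four_le_pow hj
  have hp := pow_succ_two j
  rintro (h | ⟨h3, hp2⟩)
  · omega
  · exact not_isP2_between (j := j) (by omega) (by omega) hp2

lemma Gs_epoch {t j : ℕ} (hj : 2 ≤ j) (h1 : 2 ^ j ≤ t) (h2 : t ≤ 2 ^ (j + 1) - 2) :
    Gs Rf Rg x t = Rg.hid (Rf.out x (2 ^ j - 2)) (t - 2 ^ j) := by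
  have h4 := four_le_pow hj
  have hp := pow_succ_two j
  have hlog : Nat.log 2 t = j := Nat.log_eq_of_pow_le_of_lt_pow h1 (by omega)
  unfold Gs
  rw [if_neg (by omega : ¬ t = 0), if_neg (not_Qc_epoch hj h1 h2),
    if_neg (by omega : ¬ t = 2), hlog]

lemma Cs_epoch {t j : ℕ} (hj : 2 ≤ j) (h1 : 2 ^ j ≤ t) (h2 : t ≤ 2 ^ (j + 1) - 2) :
    Cs t = (2 : ℝ) ^ ((t : ℤ) + 3 - (2 : ℤ) ^ (j + 1)) - (2 : ℝ) ^ (1 - (t : ℤ)) := by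
  have h4 := four_le_pow hj
  have hp := pow_succ_two j
  have hlog : Nat.log 2 t = j := Nat.log_eq_of_pow_le_of_lt_pow h1 (by omega)
  unfold Cs
  rw [if_neg (by omega : ¬ t = 2), if_neg (by omega : ¬ t ≤ 1),
    if_neg (not_Qc_epoch hj h1 h2), hlog]

lemma Qc_ne_zero {t : ℕ} (h : Qc t) : t ≠ 0 := by rcases h with h | ⟨h, _⟩ <;> omega

lemma Gs_qc {t : ℕ} (h : Qc t) : Gs Rf Rg x t = 0 := by
  unfold Gs; rw [if_neg (Qc_ne_zero h), if_pos h]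
lemma Gs_zero : Gs Rf Rg x 0 = Rg.hid 0 0 := by unfold Gs; rw [if_pos rfl]
lemma Gs_one : Gs Rf Rg x 1 = 0 := Gs_qc Rf Rg x Qc_one
lemma Gs_two : Gs Rf Rg x 2 = Rg.hid (Rf.out x 0) 0 := by
  unfold Gs; rw [if_neg (by omega), if_neg not_Qc_two, if_pos rfl]
lemma Gs_three : Gs Rf Rg x 3 = 0 := Gs_qc Rf Rg x Qc_three
lemma Cs_qc {t : ℕ} (h : Qc t) (h3 : 3 ≤ t) : Cs t = 0 := by
  unfold Cs; rw [if_neg (by omega), if_neg (by omega), if_pos h]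
lemma Cs_zero : Cs 0 = 0 := by simp [Cs]
lemma Cs_one : Cs 1 = 0 := by simp [Cs]
lemma Cs_two : Cs 2 = 3/2 := by simp [Cs]
lemma Cs_three : Cs 3 = 0 := Cs_qc Qc_three (by norm_num)
lemma Qs_pos {t : ℕ} (h : Qc t) : Qs t = 1 := by unfold Qs; rw [if_pos h]
lemma Qs_neg {t : ℕ} (h : ¬ Qc t) : Qs t = 0 := by unfold Qs; rw [if_neg h]
lemma Zs_pos {t : ℕ} (h : Zc t) : Zs t = 1 := by unfold Zs; rw [if_pos h]
lemma Zs_neg {t : ℕ} (h : ¬ Zc t) : Zs t = 0 := by unfold Zs; rw [if_neg h]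
lemma Zs_zero : Zs 0 = 1 := by unfold Zs; rw [if_pos Zc_zero]
lemma Zs_one : Zs 1 = 0 := by unfold Zs; rw [if_neg not_Zc_one]
lemma Zs_two : Zs 2 = 1 := by unfold Zs; rw [if_pos Zc_two]
lemma Zs_three : Zs 3 = 0 := by unfold Zs; rw [if_neg not_Zc_three]
lemma Fs_zero : Fs 0 = 3/2 := by unfold Fs; norm_num
lemma Fs_one : Fs 1 = 3/4 := by
  unfold Fs
  rw [show (-(1:ℕ):ℤ) = -1 by norm_num, zpow_neg_one]
  norm_num
lemma Fs_two : Fs 2 = 3/8 := by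
  unfold Fs
  rw [show (-(2:ℕ):ℤ) = -2 by norm_num]
  rw [show ((-2):ℤ) = (-1) + (-1) by norm_num, pw_add, zpow_neg_one]
  norm_num

end Specs


section Master
variable {df d'f mf mg d'g : ℕ}
variable (Rf : RNN (Fin df) (Fin mf) (Fin d'f)) (Rg : RNN (Fin d'f) (Fin mg) (Fin d'g))
variable (Bf Bhg : ℝ) (x : Fin df → ℝ)


theorem state_eq
    (hBf : 0 < Bf) (hBhg : 0 ≤ Bhg)
    (houtb : ∀ t b, |Rf.out x t b| ≤ Bf)
    (hhidb : ∀ (y : Fin d'f → ℝ), (∀ b, |y b| ≤ Bf) → ∀ s i, |Rg.hid y s i| ≤ Bhg) :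
    ∀ t, (Rc Rf Rg Bf Bhg).hid x t = Ss Rf Rg x t := by
  have hbo : ∀ b, |Rf.bo b| ≤ ‖Rf.bo‖ := fun b => by
    have := norm_le_pi_norm Rf.bo b; rwa [Real.norm_eq_abs] at this
  have hbon : (0:ℝ) ≤ ‖Rf.bo‖ := norm_nonneg _
  have hGb : ∀ t i, |Gs Rf Rg x t i| ≤ Bhg := by
    intro t i
    unfold Gs
    split_ifs with h1 h2 h3
    · exact hhidb 0 (fun b => by simpa using hBf.le) 0 i
    · simpa using hBhg
    · exact hhidb _ (fun b => houtb 0 b) 0 i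
    · exact hhidb _ (fun b => houtb _ b) _ i
  have hUV1 : ∀ t, Qc t → Us Rf x t - Vs Rf x t = Rf.out x (t-1) := by
    intro t h; funext b
    simp only [Us, Vs, if_pos h, Pi.sub_apply, relu, Pi.neg_apply]
    rcases le_total 0 (Rf.out x (t-1) b) with hb | hb
    · rw [max_eq_right hb, max_eq_left (by linarith)]; ring
    · rw [max_eq_left hb, max_eq_right (by linarith)]; ring
  have hUV0 : ∀ t, ¬ Qc t → Us Rf x t - Vs Rf x t = 0 := by
    intro t h; funext b; simp [Us, Vs, if_neg h]
  have hgdom : ∀ (g : Fin mg → ℝ), (∀ i, |g i| ≤ Bhg) → ∀ i,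
      (Rg.Ah.mulVec g) i + Rg.bh i - C3 Rg Bhg ≤ 0 := by
    intro g hg i
    have h1 : (Rg.Ah.mulVec g) i ≤ (∑ i', ∑ j', |Rg.Ah i' j'|) * Bhg := by
      calc (Rg.Ah.mulVec g) i = ∑ j, Rg.Ah i j * g j := rfl
      _ ≤ ∑ j, |Rg.Ah i j| * Bhg := by
          apply Finset.sum_le_sum
          intro j _
          calc Rg.Ah i j * g j ≤ |Rg.Ah i j * g j| := le_abs_self _
          _ = |Rg.Ah i j| * |g j| := abs_mul _ _
          _ ≤ |Rg.Ah i j| * Bhg := mul_le_mul_of_nonneg_left (hg j) (abs_nonneg _)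
      _ = (∑ j, |Rg.Ah i j|) * Bhg := by rw [Finset.sum_mul]
      _ ≤ (∑ i', ∑ j', |Rg.Ah i' j'|) * Bhg := by
          apply mul_le_mul_of_nonneg_right _ hBhg
          exact Finset.single_le_sum (f := fun i' => ∑ j', |Rg.Ah i' j'|)
            (fun i' _ => Finset.sum_nonneg fun j' _ => abs_nonneg _) (Finset.mem_univ i)
    have h2 : Rg.bh i ≤ ‖Rg.bh‖ := by
      have := norm_le_pi_norm Rg.bh i; rw [Real.norm_eq_abs] at this
      exact (le_abs_self _).trans this
    unfold C3; linarith
  -- uniform coordinate helpers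
  have hq_coord : ∀ t, max 0 (Zs t) = Qs (t+1) := by
    intro t
    by_cases h : Zc t
    · rw [Zs, if_pos h, Qs, if_pos ((Qc_succ t).mpr h)]; norm_num
    · rw [Zs, if_neg h, Qs, if_neg (fun hq => h ((Qc_succ t).mp hq))]; norm_num
  have hu_coord : ∀ t b, max 0 (Rf.out x t b + C2 Rf Bf * Zs t - C2 Rf Bf)
      = Us Rf x (t+1) b := by
    intro t b
    by_cases h : Zc t
    · rw [Zs, if_pos h, Us, if_pos ((Qc_succ t).mpr h)]
      simp only [relu, Nat.add_sub_cancel, mul_one]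
      ring_nf
    · rw [Zs, if_neg h, Us, if_neg (fun hq => h ((Qc_succ t).mp hq))]
      have hle : Rf.out x t b + C2 Rf Bf * 0 - C2 Rf Bf ≤ 0 := by
        have h1 := (le_abs_self _).trans (houtb t b)
        unfold C2; linarith
      rw [max_eq_left hle]; simp
  have hv_coord : ∀ t b, max 0 (-(Rf.out x t b) + C2 Rf Bf * Zs t - C2 Rf Bf)
      = Vs Rf x (t+1) b := by
    intro t b
    by_cases h : Zc t
    · rw [Zs, if_pos h, Vs, if_pos ((Qc_succ t).mpr h)]
      simp only [relu, Nat.add_sub_cancel, mul_one, Pi.neg_apply]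
      ring_nf
    · rw [Zs, if_neg h, Vs, if_neg (fun hq => h ((Qc_succ t).mp hq))]
      have h1 := (neg_le_abs _).trans (houtb t b)
      have hle : -(Rf.out x t b) + C2 Rf Bf * 0 - C2 Rf Bf ≤ 0 := by
        unfold C2; linarith
      rw [max_eq_left hle]; simp
  have hF_coord : ∀ t, max 0 (Fs t / 2) = Fs (t+1) := by
    intro t
    rw [max_eq_right (by unfold Fs; positivity), Fs_succ]
  -- g-block helpers
  have hg_zero : ∀ t, Zc t → ¬ Qc t → ∀ i,
      max 0 ((Rg.Ah.mulVec (Gs Rf Rg x t)) i + (Rg.Ax.mulVec (Us Rf x t - Vs Rf x t)) i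
        - C3 Rg Bhg * Zs t + Rg.bh i) = 0 := by
    intro t hz hq i
    rw [hUV0 t hq, Matrix.mulVec_zero, Zs, if_pos hz]
    apply max_eq_left
    have := hgdom (Gs Rf Rg x t) (hGb t) i
    simp only [Pi.zero_apply, mul_one]
    linarith
  have hg_load : ∀ t, Qc t → ¬ Zc t → Gs Rf Rg x t = 0 → ∀ i,
      max 0 ((Rg.Ah.mulVec (Gs Rf Rg x t)) i + (Rg.Ax.mulVec (Us Rf x t - Vs Rf x t)) i
        - C3 Rg Bhg * Zs t + Rg.bh i) = Rg.hid (Rf.out x (t-1)) 0 i := by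
    intro t hqt hz hG0 i
    rw [hUV1 t hqt, hG0, Matrix.mulVec_zero, Zs, if_neg hz]
    show _ = relu (Rg.Ax.mulVec (Rf.out x (t-1)) + Rg.bh) i
    simp only [relu, Pi.add_apply, Pi.zero_apply, mul_zero]
    ring_nf
  have hg_run : ∀ t (y : Fin d'f → ℝ) (s : ℕ), ¬ Qc t → ¬ Zc t →
      Gs Rf Rg x t = Rg.hid y s → ∀ i,
      max 0 ((Rg.Ah.mulVec (Gs Rf Rg x t)) i + (Rg.Ax.mulVec (Us Rf x t - Vs Rf x t)) i
        - C3 Rg Bhg * Zs t + Rg.bh i) = Rg.hid y (s+1) i := by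
    intro t y s hqt hz hG i
    rw [hUV0 t hqt, hG, Matrix.mulVec_zero, Zs, if_neg hz]
    show _ = relu (Rg.Ah.mulVec (Rg.hid y s) + Rg.bh) i
    simp only [relu, Pi.add_apply, Pi.zero_apply, mul_zero]
    ring_nf
  -- base and inductive step
  intro t
  induction t with
  | zero =>
    show relu ((Rc Rf Rg Bf Bhg).Ax.mulVec x + (Rc Rf Rg Bf Bhg).bh) = Ss Rf Rg x 0
    funext k
    rcases k with a | b | b | i | c5
    · simp only [relu, Rc, Pi.add_apply, Ss, Sum.elim_inl, Sum.elim_inr, RNN.hid]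
      rfl
    · simp only [relu, Rc, Pi.add_apply, Ss, Sum.elim_inl, Sum.elim_inr,
        Matrix.mulVec, dotProduct, Pi.zero_apply, zero_mul, Finset.sum_const_zero]
      rw [Us, if_neg not_Qc_zero]
      have h1 := hbo b
      rw [max_eq_left (by unfold C2; cases' (abs_le.mp h1) with hl hr; linarith)]
      simp
    · simp only [relu, Rc, Pi.add_apply, Ss, Sum.elim_inl, Sum.elim_inr,
        Matrix.mulVec, dotProduct, Pi.zero_apply, zero_mul, Finset.sum_const_zero]
      rw [Vs, if_neg not_Qc_zero]
      have h1 := hbo b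
      rw [max_eq_left (by unfold C2; cases' (abs_le.mp h1) with hl hr; linarith)]
      simp
    · simp only [relu, Rc, Pi.add_apply, Ss, Sum.elim_inl, Sum.elim_inr,
        Matrix.mulVec, dotProduct, Pi.zero_apply, zero_mul, Finset.sum_const_zero]
      rw [Gs, if_pos rfl]
      show _ = relu (Rg.Ax.mulVec 0 + Rg.bh) i
      rw [Matrix.mulVec_zero]
      simp [relu]
    · fin_cases c5
      · show max 0 _ = _
        simp only [Rc, Ss, Sum.elim_inl, Sum.elim_inr, Pi.add_apply,
          Matrix.mulVec, dotProduct, Pi.zero_apply, zero_mul, Finset.sum_const_zero,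
          Matrix.cons_val_zero, Matrix.cons_val_one, Matrix.head_cons]
        norm_num
      · show max 0 _ = _
        simp only [Rc, Ss, Sum.elim_inl, Sum.elim_inr, Pi.add_apply,
          Matrix.mulVec, dotProduct, Pi.zero_apply, zero_mul, Finset.sum_const_zero,
          Matrix.cons_val_zero, Matrix.cons_val_one, Matrix.head_cons]
        unfold Fs; norm_num
      · show max 0 _ = _
        simp only [Rc, Ss, Sum.elim_inl, Sum.elim_inr, Pi.add_apply,
          Matrix.mulVec, dotProduct, Pi.zero_apply, zero_mul, Finset.sum_const_zero,
          Matrix.cons_val_zero, Matrix.cons_val_one, Matrix.head_cons,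
          Matrix.cons_val_two, Matrix.tail_cons]
        unfold Cs; norm_num
      · show max 0 _ = _
        simp only [Rc, Ss, Sum.elim_inl, Sum.elim_inr, Pi.add_apply,
          Matrix.mulVec, dotProduct, Pi.zero_apply, zero_mul, Finset.sum_const_zero,
          Matrix.cons_val_zero, Matrix.cons_val_one, Matrix.head_cons,
          Matrix.cons_val_two, Matrix.tail_cons, Matrix.cons_val_three]
        rw [Zs, if_pos Zc_zero]; norm_num
      · show max 0 _ = _
        simp only [Rc, Ss, Sum.elim_inl, Sum.elim_inr, Pi.add_apply,
          Matrix.mulVec, dotProduct, Pi.zero_apply, zero_mul, Finset.sum_const_zero,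
          Matrix.cons_val_zero, Matrix.cons_val_one, Matrix.head_cons,
          Matrix.cons_val_two, Matrix.tail_cons, Matrix.cons_val_three, Matrix.cons_val_four]
        rw [Qs, if_neg not_Qc_zero]; norm_num
  | succ t ih =>
    have hstep : (Rc Rf Rg Bf Bhg).hid x (t+1) = relu (pre Rf Rg Bf Bhg x t) := by
      show relu ((Rc Rf Rg Bf Bhg).Ah.mulVec ((Rc Rf Rg Bf Bhg).hid x t)
        + (Rc Rf Rg Bf Bhg).bh) = _
      rw [ih]; rfl
    rw [hstep]
    funext k
    rcases k with a | b | b | i | c5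
    · show max 0 (pre Rf Rg Bf Bhg x t (.inl a)) = _
      rw [pre_f]
      simp only [Ss, Sum.elim_inl]
      show _ = relu (Rf.Ah.mulVec (Rf.hid x t) + Rf.bh) a
      simp [relu]
    · show max 0 (pre Rf Rg Bf Bhg x t (.inr (.inl b))) = _
      rw [pre_u]
      simp only [Ss, Sum.elim_inl, Sum.elim_inr]
      exact hu_coord t b
    · show max 0 (pre Rf Rg Bf Bhg x t (.inr (.inr (.inl b)))) = _
      rw [pre_v]
      simp only [Ss, Sum.elim_inl, Sum.elim_inr]
      exact hv_coord t b
    · show max 0 (pre Rf Rg Bf Bhg x t (.inr (.inr (.inr (.inl i))))) = _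
      rw [pre_g]
      simp only [Ss, Sum.elim_inl, Sum.elim_inr]
      by_cases ht3 : t ≤ 2
      · interval_cases t
        · rw [hg_zero 0 Zc_zero not_Qc_zero i, Gs_one Rf Rg x]
          rfl
        · rw [hg_load 1 Qc_one not_Zc_one (Gs_one Rf Rg x) i, Gs_two Rf Rg x]
        · rw [hg_zero 2 Zc_two not_Qc_two i, Gs_three Rf Rg x]
          rfl
      · have ht3' : 3 ≤ t := by omega
        set j := Nat.log 2 (t+1) with hjdef
        have hlow : 2^j ≤ t+1 := Nat.pow_log_le_self 2 (by omega)
        have hhigh : t+1 < 2^(j+1) := Nat.lt_pow_succ_log_self one_lt_two _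
        have hj2 : 2 ≤ j := by
          by_contra hcon
          have h2 : 2^(j+1) ≤ 2^2 := Nat.pow_le_pow_right (by norm_num) (by omega)
          norm_num at h2
          omega
        have h4 : 4 ≤ 2^j := four_le_pow hj2
        have hp : 2^(j+1) = 2*2^j := pow_succ_two j
        rcases (by omega : t+1 = 2^j ∨ (2^j < t+1 ∧ t+1 ≤ 2^(j+1)-2) ∨ t+1 = 2^(j+1)-1)
          with hA | ⟨hB1, hB2⟩ | hC
        · have hQt : Qc t := Or.inr ⟨by omega, by rw [show t+1 = 2^j from hA]; exact isP2_pow j⟩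
          have hZt : ¬ Zc t := by
            rintro (h | ⟨_, h2⟩)
            · omega
            · exact not_isP2_between (j := j) (by omega) (by omega) h2
          rw [hg_load t hQt hZt (Gs_qc Rf Rg x hQt) i,
            Gs_epoch Rf Rg x hj2 (by omega : 2^j ≤ t+1) (by omega : t+1 ≤ 2^(j+1)-2),
            show t - 1 = 2^j - 2 by omega, show t + 1 - 2^j = 0 by omega]
        · have hQt : ¬ Qc t := not_Qc_epoch hj2 (by omega) (by omega)
          have hZt : ¬ Zc t := by
            rintro (h | ⟨_, h2⟩)
            · omega
            · exact not_isP2_between (j := j) (by omega) (by omega) h2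
          rw [hg_run t _ _ hQt hZt
              (Gs_epoch Rf Rg x hj2 (by omega : 2^j ≤ t) (by omega : t ≤ 2^(j+1)-2)) i,
            Gs_epoch Rf Rg x hj2 (by omega : 2^j ≤ t+1) (by omega : t+1 ≤ 2^(j+1)-2),
            show t + 1 - 2^j = (t - 2^j) + 1 by omega]
        · have hZt : Zc t := Or.inr ⟨by omega,
            by rw [show t+2 = 2^(j+1) by omega]; exact isP2_pow _⟩
          have hQt : ¬ Qc t := by
            rintro (h | ⟨_, h2⟩)
            · omega
            · exact not_isP2_between (j := j) (by omega) (by omega) h2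
          rw [hg_zero t hZt hQt i, Gs_qc Rf Rg x ((Qc_succ t).mpr hZt)]
          rfl
    · fin_cases c5
      · show max 0 (pre Rf Rg Bf Bhg x t (.inr (.inr (.inr (.inr 0))))) = _
        rw [pre_O]
        simp only [Ss, Sum.elim_inl, Sum.elim_inr, Matrix.cons_val_zero]
        norm_num
      · show max 0 (pre Rf Rg Bf Bhg x t (.inr (.inr (.inr (.inr 1))))) = _
        rw [pre_F]
        simp only [Ss, Sum.elim_inl, Sum.elim_inr, Matrix.cons_val_one, Matrix.head_cons]
        exact hF_coord t
      · show max 0 (pre Rf Rg Bf Bhg x t (.inr (.inr (.inr (.inr 2))))) = _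
        rw [pre_c]
        simp only [Ss, Sum.elim_inl, Sum.elim_inr]
        show _ = Cs (t+1)
        by_cases ht3 : t ≤ 2
        · interval_cases t
          · rw [Cs_zero, Zs_zero, Fs_zero, Cs_one]; norm_num
          · rw [Cs_one, Zs_one, Fs_one, Cs_two]; norm_num
          · rw [Cs_two, Zs_two, Fs_two, Cs_three]; norm_num
        · have ht3' : 3 ≤ t := by omega
          set j := Nat.log 2 (t+1) with hjdef
          have hlow : 2^j ≤ t+1 := Nat.pow_log_le_self 2 (by omega)
          have hhigh : t+1 < 2^(j+1) := Nat.lt_pow_succ_log_self one_lt_two _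
          have hj2 : 2 ≤ j := by
            by_contra hcon
            have h2 : 2^(j+1) ≤ 2^2 := Nat.pow_le_pow_right (by norm_num) (by omega)
            norm_num at h2
            omega
          have h4 : 4 ≤ 2^j := four_le_pow hj2
          have hp : 2^(j+1) = 2*2^j := pow_succ_two j
          rcases (by omega : t+1 = 2^j ∨ (2^j < t+1 ∧ t+1 ≤ 2^(j+1)-2) ∨ t+1 = 2^(j+1)-1)
            with hA | ⟨hB1, hB2⟩ | hC
          · have hQt : Qc t := Or.inr ⟨by omega,
              by rw [show t+1 = 2^j from hA]; exact isP2_pow j⟩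
            have hZt : ¬ Zc t := by
              rintro (h | ⟨_, h2⟩)
              · omega
              · exact not_isP2_between (j := j) (by omega) (by omega) h2
            rw [Cs_qc hQt (by omega), Zs, if_neg hZt, Fs_eq,
              Cs_epoch hj2 (by omega : 2^j ≤ t+1) (by omega : t+1 ≤ 2^(j+1)-2)]
            have hz2 : ((2:ℤ))^(j+1) = 2*((t:ℤ)+1) := by
              rw [pow_succ, show ((2:ℤ))^j = (t:ℤ)+1 from by exact_mod_cast hA.symm]; ring
            have hcast : ((t+1:ℕ):ℤ) = (t:ℤ)+1 := by push_cast; ring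
            rw [hcast,
              show ((t:ℤ)) + 1 + 3 - 2^(j+1) = (-(t:ℤ)) + 2 from by rw [hz2]; ring,
              show (1:ℤ) - ((t:ℤ)+1) = -(t:ℤ) from by ring, pw_add,
              max_eq_right (by have := pw_pos (-(t:ℤ)); linarith)]
            have h22 : (2:ℝ)^((2:ℤ)) = 4 := by norm_num
            rw [h22]; ring
          · have hQt : ¬ Qc t := not_Qc_epoch hj2 (by omega) (by omega)
            have hZt : ¬ Zc t := by
              rintro (h | ⟨_, h2⟩)
              · omega
              · exact not_isP2_between (j := j) (by omega) (by omega) h2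
            rw [Cs_epoch hj2 (by omega : 2^j ≤ t) (by omega : t ≤ 2^(j+1)-2), Zs, if_neg hZt,
              Cs_epoch hj2 (by omega : 2^j ≤ t+1) (by omega : t+1 ≤ 2^(j+1)-2), Fs_eq,
              show ((t+1:ℕ):ℤ) = (t:ℤ)+1 from by push_cast; ring]
            have e1 : (2:ℝ)^((t:ℤ)+3-2^(j+1)) = (2:ℝ)^((t:ℤ)+4-2^(j+1)) / 2 := by
              rw [show (t:ℤ)+3-2^(j+1) = ((t:ℤ)+4-2^(j+1)) + (-1) from by ring, pw_add,
                zpow_neg_one]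
              try ring
            have e2 : (2:ℝ)^(1-(t:ℤ)) = 2*(2:ℝ)^(-(t:ℤ)) := by
              rw [show (1:ℤ)-(t:ℤ) = (-(t:ℤ)) + 1 from by ring, pw_add]; ring
            have e3 : (2:ℝ)^((t:ℤ)+1+3-2^(j+1)) = (2:ℝ)^((t:ℤ)+4-2^(j+1)) := by
              rw [show (t:ℤ)+1+3-2^(j+1) = (t:ℤ)+4-2^(j+1) from by ring]
            have e4 : (2:ℝ)^(1-((t:ℤ)+1)) = (2:ℝ)^(-(t:ℤ)) := by
              rw [show (1:ℤ)-((t:ℤ)+1) = -(t:ℤ) from by ring]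
            have hle : (2:ℤ)^(j+1) ≤ 2*(t:ℤ)+4 := by
              have h1 : (2^(j+1) : ℕ) ≤ 2*t+4 := by omega
              exact_mod_cast h1
            have hnn : (2:ℝ)^(-(t:ℤ)) ≤ (2:ℝ)^((t:ℤ)+4-2^(j+1)) := pw_mono (by linarith)
            rw [e1, e2, e3, e4, max_eq_right (by linarith)]
            ring
          · have hZt : Zc t := Or.inr ⟨by omega,
              by rw [show t+2 = 2^(j+1) by omega]; exact isP2_pow _⟩
            rw [Cs_epoch hj2 (by omega : 2^j ≤ t) (by omega : t ≤ 2^(j+1)-2), Zs, if_pos hZt,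
              Fs_eq, Cs_qc ((Qc_succ t).mpr hZt) (by omega)]
            have hz2 : ((t:ℤ))+2 = 2^(j+1) := by
              have h1 : t+2 = 2^(j+1) := by omega
              exact_mod_cast h1
            rw [show (t:ℤ)+3-2^(j+1) = 1 from by rw [← hz2]; ring,
              show (1:ℤ)-(t:ℤ) = (-(t:ℤ)) + 1 from by ring, pw_add]
            have hps := pw_pos (-(t:ℤ))
            have h21 : (2:ℝ)^((1:ℤ)) = 2 := by norm_num
            rw [h21, max_eq_left (by nlinarith)]
      · show max 0 (pre Rf Rg Bf Bhg x t (.inr (.inr (.inr (.inr 3))))) = _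
        rw [pre_z]
        simp only [Ss, Sum.elim_inl, Sum.elim_inr]
        show _ = Zs (t+1)
        by_cases ht3 : t ≤ 2
        · interval_cases t
          · rw [Cs_zero, Zs_zero, Fs_zero, Zs_one]; norm_num
          · rw [Cs_one, Zs_one, Fs_one, Zs_two]; norm_num
          · rw [Cs_two, Zs_two, Fs_two, Zs_three]; norm_num
        · have ht3' : 3 ≤ t := by omega
          set j := Nat.log 2 (t+1) with hjdef
          have hlow : 2^j ≤ t+1 := Nat.pow_log_le_self 2 (by omega)
          have hhigh : t+1 < 2^(j+1) := Nat.lt_pow_succ_log_self one_lt_two _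
          have hj2 : 2 ≤ j := by
            by_contra hcon
            have h2 : 2^(j+1) ≤ 2^2 := Nat.pow_le_pow_right (by norm_num) (by omega)
            norm_num at h2
            omega
          have h4 : 4 ≤ 2^j := four_le_pow hj2
          have hp : 2^(j+1) = 2*2^j := pow_succ_two j
          have hpv := pw_pos (-(t:ℤ))
          rcases (by omega : t+1 = 2^j ∨ (2^j < t+1 ∧ t+1 ≤ 2^(j+1)-2) ∨ t+1 = 2^(j+1)-1)
            with hA | ⟨hB1, hB2⟩ | hC
          · have hQt : Qc t := Or.inr ⟨by omega,
              by rw [show t+1 = 2^j from hA]; exact isP2_pow j⟩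
            have hZt : ¬ Zc t := by
              rintro (h | ⟨_, h2⟩)
              · omega
              · exact not_isP2_between (j := j) (by omega) (by omega) h2
            rw [Cs_qc hQt (by omega), Zs_neg hZt, Fs_eq,
              Zs_neg (by
                rintro (h | ⟨_, h2⟩)
                · omega
                · exact not_isP2_between (j := j) (by omega) (by omega) h2 : ¬ Zc (t+1))]
            have hmono : (2:ℝ)^(-(t:ℤ)) ≤ (2:ℝ)^(-2:ℤ) := pw_mono (by
              have h1 : (2:ℤ) ≤ (t:ℤ) := by exact_mod_cast (show 2 ≤ t by omega)
              linarith)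
            have h14 : (2:ℝ)^(-2:ℤ) = 1/4 := by norm_num
            rw [max_eq_left (by rw [h14] at hmono; linarith)]
          · have hQt : ¬ Qc t := not_Qc_epoch hj2 (by omega) (by omega)
            have hZt : ¬ Zc t := by
              rintro (h | ⟨_, h2⟩)
              · omega
              · exact not_isP2_between (j := j) (by omega) (by omega) h2
            rw [Cs_epoch hj2 (by omega : 2^j ≤ t) (by omega : t ≤ 2^(j+1)-2), Zs_neg hZt,
              Fs_eq]
            have e1 : (2:ℝ)^((t:ℤ)+3-2^(j+1)) = (2:ℝ)^((t:ℤ)+4-2^(j+1)) / 2 := by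
              rw [show (t:ℤ)+3-2^(j+1) = ((t:ℤ)+4-2^(j+1)) + (-1) from by ring, pw_add,
                zpow_neg_one]
              try ring
            have e2 : (2:ℝ)^(1-(t:ℤ)) = 2*(2:ℝ)^(-(t:ℤ)) := by
              rw [show (1:ℤ)-(t:ℤ) = (-(t:ℤ)) + 1 from by ring, pw_add]; ring
            rw [e1, e2]
            by_cases hend : t = 2^(j+1) - 3
            · have hz1 : (t:ℤ)+4-2^(j+1) = 1 := by
                have h1 : ((t:ℤ))+3 = 2^(j+1) := by
                  exact_mod_cast (show t+3 = 2^(j+1) by omega)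
                linarith
              rw [Zs_pos (Or.inr ⟨by omega,
                by rw [show t+1+2 = 2^(j+1) by omega]; exact isP2_pow _⟩ : Zc (t+1)),
                hz1, show (2:ℝ)^((1:ℤ)) = 2 from by norm_num,
                max_eq_right (by linarith)]
              ring
            · have hexp : (t:ℤ)+4-2^(j+1) ≤ 0 := by
                have h1 : ((t:ℤ))+4 ≤ 2^(j+1) := by
                  exact_mod_cast (show t+4 ≤ 2^(j+1) by omega)
                linarith
              have hle1 : (2:ℝ)^((t:ℤ)+4-2^(j+1)) ≤ 1 := pw_le_one hexp
              rw [Zs_neg (by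
                rintro (h | ⟨_, h2⟩)
                · omega
                · exact not_isP2_between (j := j) (by omega) (by omega) h2 : ¬ Zc (t+1)),
                max_eq_left (by linarith)]
          · have hZt : Zc t := Or.inr ⟨by omega,
              by rw [show t+2 = 2^(j+1) by omega]; exact isP2_pow _⟩
            have hp2 : 2^(j+2) = 2*2^(j+1) := pow_succ_two (j+1)
            rw [Cs_epoch hj2 (by omega : 2^j ≤ t) (by omega : t ≤ 2^(j+1)-2), Zs_pos hZt,
              Fs_eq]
            have hz2 : ((t:ℤ))+2 = 2^(j+1) := by
              exact_mod_cast (show t+2 = 2^(j+1) by omega)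
            rw [show (t:ℤ)+3-2^(j+1) = 1 from by rw [← hz2]; ring,
              show (1:ℤ)-(t:ℤ) = (-(t:ℤ)) + 1 from by ring, pw_add,
              show (2:ℝ)^((1:ℤ)) = 2 from by norm_num,
              Zs_neg (by
                rintro (h | ⟨_, h2⟩)
                · omega
                · exact not_isP2_between (j := j+1) (by omega) (by omega) h2 : ¬ Zc (t+1)),
              max_eq_left (by linarith)]
      · show max 0 (pre Rf Rg Bf Bhg x t (.inr (.inr (.inr (.inr 4))))) = _
        rw [pre_q]
        simp only [Ss, Sum.elim_inl, Sum.elim_inr, Matrix.cons_val_four, Matrix.tail_cons,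
          Matrix.head_cons]
        exact hq_coord t


end Master
section Final
variable {df d'f mf mg d'g : ℕ}
variable (Rf : RNN (Fin df) (Fin mf) (Fin d'f)) (Rg : RNN (Fin d'f) (Fin mg) (Fin d'g))
variable (Bf Bhg : ℝ) (x : Fin df → ℝ)

lemma out_eval (t : ℕ) (h : (Rc Rf Rg Bf Bhg).hid x t = Ss Rf Rg x t) :
    (Rc Rf Rg Bf Bhg).out x t = fun o => (Rg.Ao.mulVec (Gs Rf Rg x t)) o
      + (Rg.Ao.mulVec (Rg.hid 0 0)) o * Qs t + Rg.bo o := by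
  funext o
  show ((Rc Rf Rg Bf Bhg).Ao.mulVec ((Rc Rf Rg Bf Bhg).hid x t) + (Rc Rf Rg Bf Bhg).bo) o = _
  rw [h]
  simp only [Rc, Pi.add_apply, Matrix.mulVec, dotProduct, sumK0, Ss,
    Sum.elim_inl, Sum.elim_inr, Pi.zero_apply, zero_mul, Finset.sum_const_zero,
    Matrix.cons_val_zero, Matrix.cons_val_one, Matrix.head_cons,
    Matrix.cons_val_two, Matrix.tail_cons, Matrix.cons_val_three, Matrix.cons_val_four]
  ring

lemma Cs_bound (t : ℕ) : 0 ≤ Cs t ∧ Cs t ≤ 2 := by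
  unfold Cs
  split_ifs with h1 h2 h3
  · norm_num
  · norm_num
  · norm_num
  · have ht3 : 3 ≤ t := by
      rcases Nat.lt_or_ge t 3 with h | h
      · interval_cases t <;> simp_all
      · exact h
    set j := Nat.log 2 t with hjdef
    have hlow : 2^j ≤ t := Nat.pow_log_le_self 2 (by omega)
    have hhigh : t < 2^(j+1) := Nat.lt_pow_succ_log_self one_lt_two _
    have ht2 : t ≤ 2^(j+1) - 2 := by
      by_contra hcon
      exact h3 (Or.inr ⟨ht3, by rw [show t+1 = 2^(j+1) by omega]; exact isP2_pow _⟩)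
    have hup : ((t:ℤ)) + 3 - 2^(j+1) ≤ 1 := by
      have h1 : ((t:ℤ)) + 2 ≤ 2^(j+1) := by exact_mod_cast (show t+2 ≤ 2^(j+1) by omega)
      linarith
    have hdn : 1 - (t:ℤ) ≤ ((t:ℤ)) + 3 - 2^(j+1) := by
      have h1 : (2:ℤ)^(j+1) ≤ 2*(t:ℤ) + 2 := by
        exact_mod_cast (show 2^(j+1) ≤ 2*t+2 from by
          have := pow_succ_two j; omega)
      linarith
    constructor
    · have := pw_mono hdn
      linarith
    · have h2 := pw_mono hup
      have h3' := pw_pos (1 - (t:ℤ))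
      have h4 : (2:ℝ)^((1:ℤ)) = 2 := by norm_num
      rw [h4] at h2
      linarith

lemma Gs_decomp (t : ℕ) (hBf : 0 < Bf) (houtb : ∀ t b, |Rf.out x t b| ≤ Bf) (h : ¬ Qc t) :
    ∃ y s, (∀ b, |y b| ≤ Bf) ∧ Gs Rf Rg x t = Rg.hid y s := by
  unfold Gs
  split_ifs with h1 h2 h3
  all_goals first
    | exact ⟨0, 0, fun b => by simpa using hBf.le, rfl⟩
    | exact absurd h2 h
    | exact ⟨Rf.out x 0, 0, fun b => houtb 0 b, rfl⟩
    | exact ⟨_, _, fun b => houtb _ b, rfl⟩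


/-- hidden-index equiv onto `Fin (mf + 2*d'f + mg + 5)` -/
def eK : K0 mf d'f mg ≃ Fin (mf + 2 * d'f + mg + 5) :=
  ((Equiv.sumCongr (Equiv.refl (Fin mf))
    ((Equiv.sumCongr (Equiv.refl (Fin d'f))
      ((Equiv.sumCongr (Equiv.refl (Fin d'f))
        (finSumFinEquiv : Fin mg ⊕ Fin 5 ≃ Fin (mg + 5))).trans
          (finSumFinEquiv : Fin d'f ⊕ Fin (mg + 5) ≃ Fin (d'f + (mg + 5))))).trans
        (finSumFinEquiv : Fin d'f ⊕ Fin (d'f + (mg + 5)) ≃ Fin (d'f + (d'f + (mg + 5)))))).trans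
      (finSumFinEquiv)).trans
    (finCongr (by omega))

end Final
end S8


/-- Theorem (clocked concatenation): given RNNs `R^f` (input dim `d_f`, hidden `m_f`,
output `d'_f`) and `R^g` (input dim `d'_f`, hidden `m_g`, output `d'_g`) with
(A1) `‖(R^f 𝒟 x)[t]‖∞ ≤ B_f` on `[−D,D]^{d_f}` and
(A2) `‖(K^g 𝒟 y)[t]‖∞ ≤ B_{h,g}` on `[−B_f,B_f]^{d'_f}`, there is an RNN `R` with
input dim `d_f`, hidden state size `m_f + 2d'_f + m_g + 5`, output dim `d'_g` with
properties (i)–(iii) below. -/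
theorem stmt8 (df d'f mf mg d'g : ℕ) (D Bf Bhg : ℝ)
    (hD : 0 < D) (hBf : 0 < Bf) (hBhg : 0 < Bhg)
    (Rf : RNN (Fin df) (Fin mf) (Fin d'f)) (Rg : RNN (Fin d'f) (Fin mg) (Fin d'g))
    (hA1 : ∀ x : Fin df → ℝ, (∀ i, x i ∈ Set.Icc (-D) D) → ∀ t : ℕ, ‖Rf.out x t‖ ≤ Bf)
    (hA2 : ∀ y : Fin d'f → ℝ, (∀ i, y i ∈ Set.Icc (-Bf) Bf) → ∀ t : ℕ, ‖Rg.hid y t‖ ≤ Bhg) :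
    ∃ R : RNN (Fin df) (Fin (mf + 2 * d'f + mg + 5)) (Fin d'g),
      -- (i) clocked composition of the two networks
      (∀ x : Fin df → ℝ, (∀ i, x i ∈ Set.Icc (-D) D) → ∀ k : ℕ, 3 ≤ k →
        R.out x (2 ^ k - 2) = Rg.out (Rf.out x (2 ^ (k - 1) - 2)) (2 ^ (k - 1) - 2)) ∧
      -- (ii) readout matrices for the two sub-hidden-states
      (∃ (M : Matrix (Fin mf) (Fin (mf + 2 * d'f + mg + 5)) ℝ)
         (W : Matrix (Fin mg) (Fin (mf + 2 * d'f + mg + 5)) ℝ),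
        ∀ x : Fin df → ℝ, (∀ i, x i ∈ Set.Icc (-D) D) →
          (∀ t : ℕ, M.mulVec (R.hid x t) = Rf.hid x t) ∧
          (∀ k : ℕ, 3 ≤ k →
            W.mulVec (R.hid x (2 ^ k - 2)) =
              Rg.hid (Rf.out x (2 ^ (k - 1) - 2)) (2 ^ (k - 1) - 2))) ∧
      -- (iii) boundedness of the hidden state and the output
      (∀ Bhf Bg : ℝ, 0 < Bhf → 0 < Bg →
        (∀ x : Fin df → ℝ, (∀ i, x i ∈ Set.Icc (-D) D) → ∀ t : ℕ, ‖Rf.hid x t‖ ≤ Bhf) →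
        (∀ y : Fin d'f → ℝ, (∀ i, y i ∈ Set.Icc (-Bf) Bf) → ∀ t : ℕ, ‖Rg.out y t‖ ≤ Bg) →
        ∀ x : Fin df → ℝ, (∀ i, x i ∈ Set.Icc (-D) D) → ∀ t : ℕ,
          ‖R.hid x t‖ ≤ max (max 2 Bf) (max Bhg Bhf) ∧ ‖R.out x t‖ ≤ Bg) := by
  classical
  have hprep : ∀ x : Fin df → ℝ, (∀ i, x i ∈ Set.Icc (-D) D) →
      (∀ t b, |Rf.out x t b| ≤ Bf) ∧
      (∀ (y : Fin d'f → ℝ), (∀ b, |y b| ≤ Bf) → ∀ s i, |Rg.hid y s i| ≤ Bhg) := by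
    intro x hx
    constructor
    · intro t b
      have h1 := norm_le_pi_norm (Rf.out x t) b
      rw [Real.norm_eq_abs] at h1
      exact h1.trans (hA1 x hx t)
    · intro y hy s i
      have h1 := norm_le_pi_norm (Rg.hid y s) i
      rw [Real.norm_eq_abs] at h1
      exact h1.trans (hA2 y (fun b => Set.mem_Icc.mpr (abs_le.mp (hy b))) s)
  refine ⟨S8.RNN.reindex (S8.Rc Rf Rg Bf Bhg) S8.eK, ?_, ?_, ?_⟩
  · -- (i)
    intro x hx k hk
    obtain ⟨houtb, hhidb⟩ := hprep x hx
    have hst := S8.state_eq Rf Rg Bf Bhg x hBf hBhg.le houtb hhidb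
    rw [S8.reindex_out, S8.out_eval Rf Rg Bf Bhg x _ (hst _)]
    have hj2 : 2 ≤ k - 1 := by omega
    have hp : 2^k = 2*2^(k-1) := by
      rw [← S8.pow_succ_two (k-1)]
      congr 1
      omega
    have h4 : 4 ≤ 2^(k-1) := S8.four_le_pow hj2
    have hb1 : 2^(k-1) ≤ 2^k - 2 := by omega
    have hb2 : 2^k - 2 ≤ 2^((k-1)+1) - 2 := by
      have h5 : (k-1)+1 = k := by omega
      rw [h5]
    rw [S8.Gs_epoch Rf Rg x hj2 hb1 hb2, S8.Qs_neg (S8.not_Qc_epoch hj2 hb1 hb2),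
      show 2^k - 2 - 2^(k-1) = 2^(k-1) - 2 by omega]
    funext o
    simp [RNN.out]
  · -- (ii)
    refine ⟨fun a n => (Sum.elim (fun a' => if a' = a then (1:ℝ) else 0) 0) (S8.eK.symm n),
      fun i n => (Sum.elim (0 : Fin mf → ℝ) (Sum.elim (0 : Fin d'f → ℝ) (Sum.elim (0 : Fin d'f → ℝ) (Sum.elim
        (fun i' => if i' = i then (1:ℝ) else 0) (0 : Fin 5 → ℝ))))) (S8.eK.symm n), ?_⟩
    intro x hx
    obtain ⟨houtb, hhidb⟩ := hprep x hx
    have hst := S8.state_eq Rf Rg Bf Bhg x hBf hBhg.le houtb hhidb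
    constructor
    · intro t
      funext a
      show ∑ n, (Sum.elim (fun a' => if a' = a then (1:ℝ) else 0) 0) (S8.eK.symm n) *
        (S8.RNN.reindex (S8.Rc Rf Rg Bf Bhg) S8.eK).hid x t n = Rf.hid x t a
      rw [S8.reindex_hid]
      rw [Equiv.sum_comp S8.eK.symm (fun kk => (Sum.elim (fun a' => if a' = a then (1:ℝ) else 0)
        0) kk * (S8.Rc Rf Rg Bf Bhg).hid x t kk), hst t]
      rw [S8.sumK0]
      simp [S8.Ss]
    · intro k hk
      funext i
      show ∑ n, (Sum.elim (0 : Fin mf → ℝ) (Sum.elim (0 : Fin d'f → ℝ) (Sum.elim (0 : Fin d'f → ℝ) (Sum.elim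
          (fun i' => if i' = i then (1:ℝ) else 0) (0 : Fin 5 → ℝ))))) (S8.eK.symm n) *
        (S8.RNN.reindex (S8.Rc Rf Rg Bf Bhg) S8.eK).hid x (2^k - 2) n = _
      rw [S8.reindex_hid]
      rw [Equiv.sum_comp S8.eK.symm (fun kk => (Sum.elim (0 : Fin mf → ℝ) (Sum.elim (0 : Fin d'f → ℝ) (Sum.elim (0 : Fin d'f → ℝ) (Sum.elim
          (fun i' => if i' = i then (1:ℝ) else 0) (0 : Fin 5 → ℝ))))) kk *
        (S8.Rc Rf Rg Bf Bhg).hid x (2^k - 2) kk), hst _]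
      rw [S8.sumK0]
      have hj2 : 2 ≤ k - 1 := by omega
      have hp : 2^k = 2*2^(k-1) := by
        rw [← S8.pow_succ_two (k-1)]
        congr 1
        omega
      have h4 : 4 ≤ 2^(k-1) := S8.four_le_pow hj2
      have hb1 : 2^(k-1) ≤ 2^k - 2 := by omega
      have hb2 : 2^k - 2 ≤ 2^((k-1)+1) - 2 := by
        have h5 : (k-1)+1 = k := by omega
        rw [h5]
      rw [show (2:ℕ)^k - 2 = 2^k - 2 from rfl]
      simp only [S8.Ss, Sum.elim_inl, Sum.elim_inr, Pi.zero_apply, zero_mul,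
        Finset.sum_const_zero]
      rw [S8.Gs_epoch Rf Rg x hj2 hb1 hb2, show 2^k - 2 - 2^(k-1) = 2^(k-1) - 2 by omega]
      simp
  · -- (iii)
    intro Bhf Bg hBhf hBg hfb hgb x hx t
    obtain ⟨houtb, hhidb⟩ := hprep x hx
    have hst := S8.state_eq Rf Rg Bf Bhg x hBf hBhg.le houtb hhidb
    have hGb : ∀ t i, |S8.Gs Rf Rg x t i| ≤ Bhg := by
      intro t i
      unfold S8.Gs
      split_ifs with h1 h2 h3
      · exact hhidb 0 (fun b => by simpa using hBf.le) 0 i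
      · simpa using hBhg.le
      · exact hhidb _ (fun b => houtb 0 b) 0 i
      · exact hhidb _ (fun b => houtb _ b) _ i
    have hB2 : (2:ℝ) ≤ max (max 2 Bf) (max Bhg Bhf) :=
      le_trans (le_max_left 2 Bf) (le_max_left _ _)
    have hBfB : Bf ≤ max (max 2 Bf) (max Bhg Bhf) :=
      le_trans (le_max_right 2 Bf) (le_max_left _ _)
    have hBhgB : Bhg ≤ max (max 2 Bf) (max Bhg Bhf) :=
      le_trans (le_max_left Bhg Bhf) (le_max_right _ _)
    have hBhfB : Bhf ≤ max (max 2 Bf) (max Bhg Bhf) :=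
      le_trans (le_max_right Bhg Bhf) (le_max_right _ _)
    constructor
    · rw [S8.reindex_hid]
      refine (pi_norm_le_iff_of_nonneg (by linarith)).mpr ?_
      intro n
      show ‖(S8.Rc Rf Rg Bf Bhg).hid x t (S8.eK.symm n)‖ ≤ _
      rw [hst t, Real.norm_eq_abs]
      rcases hkk : S8.eK.symm n with a | b | b | i | c5
      · simp only [S8.Ss, Sum.elim_inl]
        have h1 := norm_le_pi_norm (Rf.hid x t) a
        rw [Real.norm_eq_abs] at h1
        exact le_trans (h1.trans (hfb x hx t)) hBhfB
      · simp only [S8.Ss, Sum.elim_inl, Sum.elim_inr]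
        refine le_trans ?_ hBfB
        unfold S8.Us
        split_ifs with hq
        · show |max 0 (Rf.out x (t-1) b)| ≤ Bf
          rw [abs_of_nonneg (le_max_left _ _)]
          exact max_le hBf.le (abs_le.mp (houtb (t-1) b)).2
        · simpa using hBf.le
      · simp only [S8.Ss, Sum.elim_inl, Sum.elim_inr]
        refine le_trans ?_ hBfB
        unfold S8.Vs
        split_ifs with hq
        · show |max 0 (-(Rf.out x (t-1)) b)| ≤ Bf
          rw [abs_of_nonneg (le_max_left _ _)]
          refine max_le hBf.le ?_
          have := (abs_le.mp (houtb (t-1) b)).1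
          linarith
        · simpa using hBf.le
      · show |S8.Gs Rf Rg x t i| ≤ _
        exact le_trans (hGb t i) hBhgB
      · fin_cases c5
        · show |(1:ℝ)| ≤ _
          rw [abs_one]
          linarith
        · show |S8.Fs t| ≤ _
          refine le_trans ?_ hB2
          unfold S8.Fs
          rw [abs_of_nonneg (by positivity)]
          have h1 := S8.pw_le_one (show -(t:ℤ) ≤ 0 by simp)
          nlinarith
        · show |S8.Cs t| ≤ _
          refine le_trans ?_ hB2
          obtain ⟨hc1, hc2⟩ := S8.Cs_bound t
          rw [abs_of_nonneg hc1]
          exact hc2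
        · show |S8.Zs t| ≤ _
          refine le_trans ?_ hB2
          unfold S8.Zs
          split_ifs <;> norm_num
        · show |S8.Qs t| ≤ _
          refine le_trans ?_ hB2
          unfold S8.Qs
          split_ifs <;> norm_num
    · rw [S8.reindex_out, S8.out_eval Rf Rg Bf Bhg x t (hst t)]
      by_cases hq : S8.Qc t
      · have heq : ((fun o => (Rg.Ao.mulVec (S8.Gs Rf Rg x t)) o
            + (Rg.Ao.mulVec (Rg.hid 0 0)) o * S8.Qs t + Rg.bo o) : Fin d'g → ℝ)
            = Rg.out 0 0 := by
          funext o
          rw [S8.Gs_qc Rf Rg x hq, Matrix.mulVec_zero, S8.Qs_pos hq]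
          simp [RNN.out]
        rw [heq]
        exact hgb 0 (fun b => Set.mem_Icc.mpr ⟨by simpa using (neg_nonpos.mpr hBf.le),
          by simpa using hBf.le⟩) 0
      · obtain ⟨y, s, hy, hGs⟩ := S8.Gs_decomp Rf Rg Bf x t hBf houtb hq
        have heq : ((fun o => (Rg.Ao.mulVec (S8.Gs Rf Rg x t)) o
            + (Rg.Ao.mulVec (Rg.hid 0 0)) o * S8.Qs t + Rg.bo o) : Fin d'g → ℝ)
            = Rg.out y s := by
          funext o
          rw [hGs, S8.Qs_neg hq]
          simp [RNN.out]
        rw [heq]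
        exact hgb y (fun b => Set.mem_Icc.mpr (abs_le.mp (hy b))) s
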